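/- Let n ≥ 1 and u, v : {1,…,n} → ℝ satisfy u_i ≠ 0 for all i ∈ {1,…,n}, u_{i+1} v_i − u_i v_{i+1} ≠ 0 for all 1 ≤ i ≤ n−1, and u_n v_n ≠ 0. Then the inverse of the factorizable matrix Q(u,v) is symmetric tridiagonal: (Q⁻¹)_{11} = δ_1, (Q⁻¹)_{ii} = δ_i + δ_{i−1} θ_i² for 2 ≤ i ≤ n, (Q⁻¹)_{i,i+1} = (Q⁻¹)_{i+1,i} = −δ_i θ_{i+1} for 1 ≤ i ≤ n−1, and (Q⁻¹)_{ij} = 0 whenever |i − j| ≥ 2. -/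

import Mathlib

open Matrix BigOperators

noncomputable def facQ (n : ℕ) (u v : Fin n → ℝ) : Matrix (Fin n) (Fin n) ℝ :=
  Matrix.of fun i j => if i ≤ j then u i * v j else u j * v i

noncomputable def facDelta (n : ℕ) (u v : Fin n → ℝ) (i : Fin n) : ℝ :=
  if h : (i : ℕ) + 1 < n then
    u ⟨(i : ℕ) + 1, h⟩ / (u i * (u ⟨(i : ℕ) + 1, h⟩ * v i - u i * v ⟨(i : ℕ) + 1, h⟩))
  else 1 / (u i * v i)

noncomputable def facOd (n : ℕ) (u v : Fin n → ℝ) (i : Fin n) : ℝ :=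
  if h : (i : ℕ) + 1 < n then -(facDelta n u v i * (u i / u ⟨(i : ℕ) + 1, h⟩)) else 0

noncomputable def facDg (n : ℕ) (u v : Fin n → ℝ) (i : Fin n) : ℝ :=
  facDelta n u v i +
    (if 0 < (i : ℕ) then
      facDelta n u v ⟨(i : ℕ) - 1, lt_of_le_of_lt (Nat.sub_le _ _) i.isLt⟩ *
        (u ⟨(i : ℕ) - 1, lt_of_le_of_lt (Nat.sub_le _ _) i.isLt⟩ / u i) ^ 2
     else 0)

noncomputable def facT (n : ℕ) (u v : Fin n → ℝ) : Matrix (Fin n) (Fin n) ℝ :=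
  Matrix.of fun i j =>
    (if i = j then facDg n u v j else 0) +
    (if (i : ℕ) + 1 = (j : ℕ) then facOd n u v i else 0) +
    (if (j : ℕ) + 1 = (i : ℕ) then facOd n u v j else 0)

lemma facQT_sum (n : ℕ) (u v : Fin n → ℝ) (i k : Fin n) :
    (facQ n u v * facT n u v) i k =
      facQ n u v i k * facDg n u v k +
      (if hk : 0 < (k : ℕ) then
        facQ n u v i ⟨(k : ℕ) - 1, lt_of_le_of_lt (Nat.sub_le _ _) k.isLt⟩ *
          facOd n u v ⟨(k : ℕ) - 1, lt_of_le_of_lt (Nat.sub_le _ _) k.isLt⟩ else 0) +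
      (if hk : (k : ℕ) + 1 < n then
        facQ n u v i ⟨(k : ℕ) + 1, hk⟩ * facOd n u v k else 0) := by
  rw [Matrix.mul_apply]
  simp only [facT, Matrix.of_apply, mul_add, mul_ite, mul_zero]
  rw [Finset.sum_add_distrib, Finset.sum_add_distrib]
  congr 1
  · congr 1
    · rw [Finset.sum_ite_eq' Finset.univ k (fun j => facQ n u v i j * facDg n u v k)]
      simp
    · by_cases hk : 0 < (k : ℕ)
      · rw [dif_pos hk]
        set k' : Fin n := ⟨(k : ℕ) - 1, lt_of_le_of_lt (Nat.sub_le _ _) k.isLt⟩ with hk'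
        have : ∀ j : Fin n, ((j : ℕ) + 1 = (k : ℕ)) ↔ j = k' := by
          intro j
          rw [Fin.ext_iff]
          simp only [hk']
          omega
        simp only [this]
        rw [Finset.sum_ite_eq' Finset.univ k' (fun j => facQ n u v i j * facOd n u v j)]
        simp
      · rw [dif_neg hk]
        apply Finset.sum_eq_zero
        intro j _
        rw [if_neg]
        omega
  · by_cases hk : (k : ℕ) + 1 < n
    · rw [dif_pos hk]
      set k' : Fin n := ⟨(k : ℕ) + 1, hk⟩ with hk'
      have : ∀ j : Fin n, ((k : ℕ) + 1 = (j : ℕ)) ↔ j = k' := by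
        intro j
        rw [Fin.ext_iff]
        simp only [hk']
        omega
      simp only [this]
      rw [Finset.sum_ite_eq' Finset.univ k' (fun j => facQ n u v i j * facOd n u v k)]
      simp
    · rw [dif_neg hk]
      apply Finset.sum_eq_zero
      intro j _
      rw [if_neg]
      omega

set_option maxHeartbeats 1000000 in
lemma facQ_mul_facT (n : ℕ) (hn : 1 ≤ n) (u v : Fin n → ℝ)
    (hu : ∀ i : Fin n, u i ≠ 0)
    (h2 : ∀ (i : Fin n) (h : (i : ℕ) + 1 < n),
      u ⟨(i : ℕ) + 1, h⟩ * v i - u i * v ⟨(i : ℕ) + 1, h⟩ ≠ 0)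
    (h3 : u ⟨n - 1, Nat.sub_lt hn Nat.one_pos⟩ * v ⟨n - 1, Nat.sub_lt hn Nat.one_pos⟩ ≠ 0) :
    facQ n u v * facT n u v = 1 := by
  ext i k
  rw [facQT_sum, Matrix.one_apply]
  rcases k with ⟨kk, hkk⟩
  rcases i with ⟨ii, hii⟩
  simp only [facQ, facDg, facOd, facDelta, Matrix.of_apply, Fin.mk_le_mk, Fin.mk.injEq]
  by_cases hkn : kk + 1 < n
  · -- k not last
    have Hk : u ⟨kk + 1, hkn⟩ * v ⟨kk, hkk⟩ - u ⟨kk, hkk⟩ * v ⟨kk + 1, hkn⟩ ≠ 0 := by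
      simpa using h2 ⟨kk, hkk⟩ hkn
    have hu1 : u ⟨kk, hkk⟩ ≠ 0 := hu _
    have hu2 : u ⟨kk + 1, hkn⟩ ≠ 0 := hu _
    by_cases hk0 : 0 < kk
    · -- interior column
      have hx : kk - 1 + 1 < n := by omega
      have hxm : kk - 1 < n := by omega
      have e1 : (⟨kk - 1 + 1, hx⟩ : Fin n) = ⟨kk, hkk⟩ := by
        apply Fin.ext; simp; omega
      have Hkm : u ⟨kk, hkk⟩ * v ⟨kk - 1, hxm⟩ - u ⟨kk - 1, hxm⟩ * v ⟨kk, hkk⟩ ≠ 0 := by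
        have := h2 ⟨kk - 1, hxm⟩ hx
        simpa [e1] using this
      have hu0 : u ⟨kk - 1, hxm⟩ ≠ 0 := hu _
      simp only [dif_pos hk0, if_pos hk0, dif_pos hkn, dif_pos hx, e1]
      rcases Nat.lt_trichotomy ii kk with hik | hik | hik
      · rw [if_pos (show ii ≤ kk by omega), if_pos (show ii ≤ kk - 1 by omega),
            if_pos (show ii ≤ kk + 1 by omega), if_neg (show ¬ ii = kk by omega)]
        generalize u ⟨kk + 1, hkn⟩ = a1 at *; generalize v ⟨kk + 1, hkn⟩ = b1 at *; generalize u ⟨kk - 1, hxm⟩ = a0 at *; generalize v ⟨kk - 1, hxm⟩ = b0 at *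
        have Hk' : v ⟨kk, hkk⟩ * a1 - u ⟨kk, hkk⟩ * b1 ≠ 0 := by contrapose! Hk; linarith
        have Hkm' : u ⟨kk, hkk⟩ * b0 - v ⟨kk, hkk⟩ * a0 ≠ 0 := by contrapose! Hkm; linarith
        field_simp
        ring
      · rw [if_pos (show ii ≤ kk by omega), if_neg (show ¬ ii ≤ kk - 1 by omega),
            if_pos (show ii ≤ kk + 1 by omega), if_pos (show ii = kk by omega)]
        subst hik
        generalize u ⟨ii + 1, hkn⟩ = a1 at *; generalize v ⟨ii + 1, hkn⟩ = b1 at *; generalize u ⟨ii - 1, hxm⟩ = a0 at *; generalize v ⟨ii - 1, hxm⟩ = b0 at *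
        have Hk' : v ⟨ii, hkk⟩ * a1 - u ⟨ii, hkk⟩ * b1 ≠ 0 := by contrapose! Hk; linarith
        field_simp
        ring
      · rw [if_neg (show ¬ ii ≤ kk by omega), if_neg (show ¬ ii ≤ kk - 1 by omega),
            if_neg (show ¬ ii = kk by omega)]
        by_cases hik2 : ii = kk + 1
        · rw [if_pos (show ii ≤ kk + 1 by omega)]
          subst hik2
          field_simp
          ring
        · rw [if_neg (show ¬ ii ≤ kk + 1 by omega)]
          field_simp
          ring
    · -- first column
      have hk0' : kk = 0 := by omega
      subst hk0'
      simp only [dif_neg hk0, if_neg hk0, dif_pos hkn]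
      rcases Nat.eq_or_lt_of_le (Nat.zero_le ii) with hik | hik
      · rw [if_pos (show ii ≤ 0 by omega), if_pos (show ii ≤ 0 + 1 by omega),
            if_pos (show ii = 0 by omega)]
        have hik' : ii = 0 := hik.symm
        subst hik'
        generalize u ⟨0 + 1, hkn⟩ = a1 at *; generalize v ⟨0 + 1, hkn⟩ = b1 at *
        have Hk' : v ⟨0, hkk⟩ * a1 - u ⟨0, hkk⟩ * b1 ≠ 0 := by contrapose! Hk; linarith
        field_simp
        ring
      · rw [if_neg (show ¬ ii ≤ 0 by omega), if_neg (show ¬ ii = 0 by omega)]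
        by_cases hik2 : ii = 1
        · rw [if_pos (show ii ≤ 0 + 1 by omega)]
          subst hik2
          field_simp
          ring
        · rw [if_neg (show ¬ ii ≤ 0 + 1 by omega)]
          field_simp
          ring
  · -- last column: kk = n - 1
    have hkl : kk = n - 1 := by omega
    have eN : (⟨n - 1, Nat.sub_lt hn Nat.one_pos⟩ : Fin n) = ⟨kk, hkk⟩ := by
      apply Fin.ext; simp; omega
    have H3 : u ⟨kk, hkk⟩ * v ⟨kk, hkk⟩ ≠ 0 := by rw [← eN]; exact h3
    have hu1 : u ⟨kk, hkk⟩ ≠ 0 := hu _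
    have hv1 : v ⟨kk, hkk⟩ ≠ 0 := right_ne_zero_of_mul H3
    simp only [dif_neg hkn]
    by_cases hk0 : 0 < kk
    · have hx : kk - 1 + 1 < n := by omega
      have hxm : kk - 1 < n := by omega
      have e1 : (⟨kk - 1 + 1, hx⟩ : Fin n) = ⟨kk, hkk⟩ := by
        apply Fin.ext; simp; omega
      have Hkm : u ⟨kk, hkk⟩ * v ⟨kk - 1, hxm⟩ - u ⟨kk - 1, hxm⟩ * v ⟨kk, hkk⟩ ≠ 0 := by
        have := h2 ⟨kk - 1, hxm⟩ hx
        simpa [e1] using this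
      have hu0 : u ⟨kk - 1, hxm⟩ ≠ 0 := hu _
      simp only [dif_pos hk0, if_pos hk0, dif_pos hx, e1]
      rcases Nat.lt_trichotomy ii kk with hik | hik | hik
      · rw [if_pos (show ii ≤ kk by omega), if_pos (show ii ≤ kk - 1 by omega),
            if_neg (show ¬ ii = kk by omega)]
        generalize u ⟨kk - 1, hxm⟩ = a0 at *; generalize v ⟨kk - 1, hxm⟩ = b0 at *
        have Hkm' : u ⟨kk, hkk⟩ * b0 - v ⟨kk, hkk⟩ * a0 ≠ 0 := by contrapose! Hkm; linarith
        field_simp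
        ring
      · rw [if_pos (show ii ≤ kk by omega), if_neg (show ¬ ii ≤ kk - 1 by omega),
            if_pos (show ii = kk by omega)]
        subst hik
        field_simp
        ring
      · omega
    · -- n = 1
      have hk0' : kk = 0 := by omega
      subst hk0'
      have hi0 : ii = 0 := by omega
      subst hi0
      rw [dif_neg hk0, if_neg hk0, if_pos (show (0:ℕ) ≤ 0 from le_rfl),
          if_pos (show (0:ℕ) = 0 from rfl)]
      field_simp
      ring

theorem stmt_2 (n : ℕ) (hn : 1 ≤ n) (u v : Fin n → ℝ)
    (hu : ∀ i : Fin n, u i ≠ 0)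
    (h2 : ∀ (i : Fin n) (h : (i : ℕ) + 1 < n),
      u ⟨(i : ℕ) + 1, h⟩ * v i - u i * v ⟨(i : ℕ) + 1, h⟩ ≠ 0)
    (h3 : u ⟨n - 1, by omega⟩ * v ⟨n - 1, by omega⟩ ≠ 0) :
    ((facQ n u v)⁻¹ ⟨0, by omega⟩ ⟨0, by omega⟩ = facDelta n u v ⟨0, by omega⟩) ∧
    (∀ i : Fin n, 0 < (i : ℕ) →
      (facQ n u v)⁻¹ i i =
        facDelta n u v i +
          facDelta n u v ⟨(i : ℕ) - 1, lt_of_le_of_lt (Nat.sub_le _ _) i.isLt⟩ *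
            (u ⟨(i : ℕ) - 1, lt_of_le_of_lt (Nat.sub_le _ _) i.isLt⟩ / u i) ^ 2) ∧
    (∀ (i : Fin n) (h : (i : ℕ) + 1 < n),
      (facQ n u v)⁻¹ i ⟨(i : ℕ) + 1, h⟩ = -(facDelta n u v i * (u i / u ⟨(i : ℕ) + 1, h⟩)) ∧
      (facQ n u v)⁻¹ ⟨(i : ℕ) + 1, h⟩ i = -(facDelta n u v i * (u i / u ⟨(i : ℕ) + 1, h⟩))) ∧
    (∀ i j : Fin n, ((i : ℕ) + 2 ≤ (j : ℕ) ∨ (j : ℕ) + 2 ≤ (i : ℕ)) →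
      (facQ n u v)⁻¹ i j = 0) := by
  have hT : (facQ n u v)⁻¹ = facT n u v :=
    Matrix.inv_eq_right_inv (facQ_mul_facT n hn u v hu h2 h3)
  rw [hT]
  refine ⟨?_, ?_, ?_, ?_⟩
  · simp [facT, facDg]
  · intro i hi
    simp only [facT, facDg, Matrix.of_apply]
    rw [if_true, if_pos hi, if_neg (show ¬((i:ℕ) + 1 = (i:ℕ)) from by omega)]
    ring
  · intro i h
    constructor
    · simp only [facT, facOd, Matrix.of_apply]
      rw [if_neg (show ¬(i = ⟨(i:ℕ) + 1, h⟩) from by rw [Fin.ext_iff]; simp),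
          if_true, dif_pos h, if_neg (show ¬((i:ℕ) + 1 + 1 = (i:ℕ)) from by omega)]
      ring
    · simp only [facT, facOd, Matrix.of_apply]
      rw [if_true, dif_pos h,
          if_neg (show ¬((⟨(i:ℕ) + 1, h⟩ : Fin n) = i) from by rw [Fin.ext_iff]; simp),
          if_neg (show ¬((i:ℕ) + 1 + 1 = (i:ℕ)) from by omega)]
      ring
  · intro i j hij
    simp only [facT, Matrix.of_apply]
    rw [if_neg (by rw [Fin.ext_iff]; omega), if_neg (by omega), if_neg (by omega)]
    norm_num
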